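/- Let F be differentiable with L-Lipschitz gradient and let (w_t), (v_t) be SGD trajectories over Bregman loss on the same sample sequence starting from initial points w_0 and v_0 = w_0 + δ/K for some δ ∈ ℝ^d (i.e. the perturbation of the initial aggregated model caused by one client changing one sample). Then for all g ∈ ℝ^d, ∑_{t=1}^τ η_t ⟪g, ∇F(w_{t-1}) - ∇F(v_{t-1})⟫ ≤ (L b / K) ‖g‖ ‖δ‖ with b = ∑_{t=1}^τ η_t ∏_{h=1}^{t-1}(1 + Lη_h). -/

import Mathlib

open InnerProductSpace Finset

/-- When the initial points of two parallel SGD trajectories differ by `δ/K` (the perturbation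
of the aggregated model caused by one client changing one sample), the inner product sum is
bounded by `(L b / K) ‖g‖ ‖δ‖`. -/
theorem sgd_inner_product_bound_aggregated {d K : ℕ} (hK : 0 < K)
    (F : EuclideanSpace ℝ (Fin d) → ℝ) (hF : Differentiable ℝ F) (L : ℝ)
    (hLip : ∀ x y, ‖gradient F x - gradient F y‖ ≤ L * ‖x - y‖)
    (τ : ℕ) (η : ℕ → ℝ) (hη : ∀ t, 0 < η t)
    (z w v : ℕ → EuclideanSpace ℝ (Fin d)) (δ : EuclideanSpace ℝ (Fin d))
    (h0 : v 0 = w 0 + (1 / (K : ℝ)) • δ)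
    (hw : ∀ t < τ, w (t + 1) = w t - η (t + 1) • (gradient F (w t) - gradient F (z (t + 1))))
    (hv : ∀ t < τ, v (t + 1) = v t - η (t + 1) • (gradient F (v t) - gradient F (z (t + 1))))
    (g : EuclideanSpace ℝ (Fin d)) :
    ∑ t ∈ Finset.range τ, η (t + 1) * (inner ℝ g (gradient F (w t) - gradient F (v t)) : ℝ)
      ≤ (L * (∑ t ∈ Finset.range τ, η (t + 1) * ∏ h ∈ Finset.range t, (1 + L * η (h + 1)))
          / K) * ‖g‖ * ‖δ‖ := by
  by_cases hδ : δ = 0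
  · have heq : ∀ t, t ≤ τ → w t = v t := by
      intro t ht
      induction t with
      | zero => simp [h0, hδ]
      | succ n ih =>
        have hn : n < τ := Nat.lt_of_succ_le ht
        rw [hw n hn, hv n hn, ih (le_of_lt hn)]
    have hz : ∀ t ∈ Finset.range τ,
        η (t + 1) * (inner ℝ g (gradient F (w t) - gradient F (v t)) : ℝ) = 0 := by
      intro t ht
      rw [heq t (le_of_lt (Finset.mem_range.mp ht))]
      simp
    rw [Finset.sum_congr rfl hz]
    simp [hδ]
  · have hδpos : 0 < ‖δ‖ := norm_pos_iff.mpr hδ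
    have hKpos : (0 : ℝ) < K := by exact_mod_cast hK
    have hL : 0 ≤ L := by
      have h1 := hLip δ 0
      simp only [sub_zero] at h1
      nlinarith [norm_nonneg (gradient F δ - gradient F 0)]
    have hbound : ∀ t, t ≤ τ →
        ‖w t - v t‖ ≤ (‖δ‖ / K) * ∏ h ∈ Finset.range t, (1 + L * η (h + 1)) := by
      intro t ht
      induction t with
      | zero =>
        rw [h0]
        have : w 0 - (w 0 + (1 / (K : ℝ)) • δ) = -((1 / (K : ℝ)) • δ) := by abel
        rw [this, norm_neg, norm_smul]
        simp [abs_of_pos (by positivity : (0:ℝ) < 1 / (K : ℝ)), div_eq_mul_inv, mul_comm]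
      | succ n ih =>
        have hn : n < τ := Nat.lt_of_succ_le ht
        have ihn := ih (le_of_lt hn)
        have hstep : w (n + 1) - v (n + 1)
            = (w n - v n) - η (n + 1) • (gradient F (w n) - gradient F (v n)) := by
          rw [hw n hn, hv n hn]
          simp only [smul_sub]
          abel
        have h1 : ‖w (n + 1) - v (n + 1)‖
            ≤ ‖w n - v n‖ + η (n + 1) * (L * ‖w n - v n‖) := by
          rw [hstep]
          refine (norm_sub_le _ _).trans ?_
          have h2 : ‖η (n + 1) • (gradient F (w n) - gradient F (v n))‖
              ≤ η (n + 1) * (L * ‖w n - v n‖) := by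
            rw [norm_smul, Real.norm_eq_abs, abs_of_pos (hη (n + 1))]
            exact mul_le_mul_of_nonneg_left (hLip _ _) (hη (n + 1)).le
          linarith
        rw [Finset.prod_range_succ]
        calc ‖w (n + 1) - v (n + 1)‖ ≤ (1 + L * η (n + 1)) * ‖w n - v n‖ := by nlinarith
          _ ≤ (1 + L * η (n + 1)) * ((‖δ‖ / K) * ∏ h ∈ Finset.range n, (1 + L * η (h + 1))) := by
              have : 0 ≤ 1 + L * η (n + 1) := by nlinarith [(hη (n + 1)).le]
              exact mul_le_mul_of_nonneg_left ihn this
          _ = ‖δ‖ / K * ((∏ h ∈ Finset.range n, (1 + L * η (h + 1))) * (1 + L * η (n + 1))) := by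
              ring
    have hrhs : (L * (∑ t ∈ Finset.range τ, η (t + 1) * ∏ h ∈ Finset.range t, (1 + L * η (h + 1)))
          / K) * ‖g‖ * ‖δ‖
        = ∑ t ∈ Finset.range τ,
            η (t + 1) * (‖g‖ * (L * ((‖δ‖ / K) * ∏ h ∈ Finset.range t, (1 + L * η (h + 1))))) := by
      rw [Finset.mul_sum, Finset.sum_div, Finset.sum_mul, Finset.sum_mul]
      exact Finset.sum_congr rfl fun t _ => by ring
    rw [hrhs]
    apply Finset.sum_le_sum
    intro t ht
    have htτ : t ≤ τ := le_of_lt (Finset.mem_range.mp ht)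
    have hprod : 0 ≤ ∏ h ∈ Finset.range t, (1 + L * η (h + 1)) :=
      Finset.prod_nonneg fun h _ => by nlinarith [(hη (h + 1)).le]
    refine mul_le_mul_of_nonneg_left ?_ (hη (t + 1)).le
    calc (inner ℝ g (gradient F (w t) - gradient F (v t)) : ℝ)
        ≤ ‖g‖ * ‖gradient F (w t) - gradient F (v t)‖ := real_inner_le_norm g _
      _ ≤ ‖g‖ * (L * ‖w t - v t‖) := by
          exact mul_le_mul_of_nonneg_left (hLip _ _) (norm_nonneg g)
      _ ≤ ‖g‖ * (L * ((‖δ‖ / K) * ∏ h ∈ Finset.range t, (1 + L * η (h + 1)))) := by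
          exact mul_le_mul_of_nonneg_left
            (mul_le_mul_of_nonneg_left (hbound t htτ) hL) (norm_nonneg g)
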